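/- Assume G is abelian. Let A be a discrete connection form with D-type domain U, s : V → P a section over V ⊆ B, N ≥ 2, and m_• = (m₀,…,m_N) a discrete loop in B (m_N = m₀) such that (m₀,m_k,m_{k+1}) ∈ V''⁽³⁾ for all k = 0,…,N−1. Then the discrete holonomy phase HP(m_•,q̄) does not depend on the starting point q̄ ∈ π⁻¹(m₀) and equals (∏_{k=1}^N A_s(m_{k-1},m_k))⁻¹. -/
import Mathlib


/-- for an abelian structure group `G`, the discrete holonomy
phase `HP(m_•,q̄) = κ(q̄, q_N)` around a discrete loop `m_•` (with all triples
`(m₀,m_k,m_{k+1})` in `V''⁽³⁾`) does not depend on the starting point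
`q̄ ∈ π⁻¹(m₀)` and equals `(∏_{k=1}^N A_s(m_{k-1},m_k))⁻¹`. -/
theorem discrete_holonomy_phase_abelian_connection_formula
    {G : Type*} [CommGroup G] {P : Type*} [MulAction G P] {B : Type*}
    (π : P → B)
    (hfree : ∀ (g : G) (q : P), g • q = q → g = 1)
    (hπ : ∀ q₀ q₁ : P, π q₀ = π q₁ ↔ ∃ g : G, g • q₀ = q₁)
    (κ : P → P → G)
    (hκ : ∀ q₀ q₁ : P, π q₀ = π q₁ → κ q₀ q₁ • q₀ = q₁)
    (U : Set (P × P))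
    (hUinv : ∀ q₀ q₁ : P, (q₀, q₁) ∈ U → ∀ g₀ g₁ : G, (g₀ • q₀, g₁ • q₁) ∈ U)
    (hUvert : ∀ q₀ q₁ : P, π q₀ = π q₁ → (q₀, q₁) ∈ U)
    (A : P → P → G)
    (hAid : ∀ q : P, A q q = 1)
    (hAequiv : ∀ q₀ q₁ : P, (q₀, q₁) ∈ U → ∀ g₀ g₁ : G,
      A (g₀ • q₀) (g₁ • q₁) = g₁ * A q₀ q₁ * g₀⁻¹)
    (V : Set B) (s : B → P) (hs : ∀ m ∈ V, π (s m) = m)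
    (V'' : Set (B × B))
    (hV'' : V'' = {p : B × B | p.1 ∈ V ∧ p.2 ∈ V ∧ (s p.1, s p.2) ∈ U})
    -- a discrete loop `m_•` with all triples `(m₀, m_k, m_{k+1})` in `V''⁽³⁾`
    (N : ℕ) (hN : 2 ≤ N) (m : ℕ → B) (hloop : m N = m 0)
    (htr : ∀ k < N, ∀ x ∈ ({m 0, m k, m (k + 1)} : Set B),
      ∀ y ∈ ({m 0, m k, m (k + 1)} : Set B), (x, y) ∈ V'')
    -- an arbitrary starting point `q̄ ∈ π⁻¹(m₀)` and the discrete horizontal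
    -- lift `q_•` of `m_•` (with respect to `h_A`) starting at `q̄`
    (qbar : P) (hqbar : π qbar = m 0)
    (q : ℕ → P) (hq0 : q 0 = qbar)
    (hlift : ∀ k < N, ∃ q' : P, π q' = m (k + 1) ∧ (q k, q') ∈ U ∧
      q (k + 1) = (A (q k) q')⁻¹ • q') :
    κ qbar (q N)
      = (((List.range N).map (fun k => A (s (m k)) (s (m (k + 1))))).prod)⁻¹ := by

  set f : ℕ → G := fun k => A (s (m k)) (s (m (k + 1))) with hf
  have hm0V : m 0 ∈ V := by
    have := htr 0 (by omega) (m 0) (by simp) (m 0) (by simp)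
    rw [hV''] at this; exact this.1
  have hmV : ∀ k ≤ N, m k ∈ V := by
    intro k hk
    rcases eq_or_lt_of_le hk with rfl | hk
    · rw [hloop]; exact hm0V
    · have := htr k hk (m k) (by simp) (m k) (by simp)
      rw [hV''] at this; exact this.1
  have huniq : ∀ (a b : G) (x : P), a • x = b • x → a = b := by
    intro a b x h
    have h1 : (b⁻¹ * a) • x = x := by rw [mul_smul, h, inv_smul_smul]
    exact (inv_mul_eq_one.mp (hfree _ _ h1)).symm
  have hq0' : κ (s (m 0)) qbar • s (m 0) = qbar :=
    hκ _ _ (by rw [hs _ hm0V, hqbar])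
  have key : ∀ k ≤ N, q k
      = (κ (s (m 0)) qbar * (((List.range k).map f).prod)⁻¹) • s (m k) := by
    intro k hk
    induction k with
    | zero => simpa [hq0] using hq0'.symm
    | succ k ih =>
      have hk' : k < N := hk
      have ihq := ih (le_of_lt hk')
      obtain ⟨q', hπq', hU', hq'⟩ := hlift k hk'
      have hkV : m (k + 1) ∈ V := hmV _ hk
      have hππ : π (s (m (k + 1))) = π q' := by rw [hs _ hkV, hπq']
      obtain ⟨h, hh⟩ := (hπ _ _).mp hππ
      have hUs : (s (m k), s (m (k + 1))) ∈ U := by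
        have := htr k hk' (m k) (by simp) (m (k + 1)) (by simp)
        rw [hV''] at this; exact this.2.2
      set g := κ (s (m 0)) qbar * (((List.range k).map f).prod)⁻¹ with hg
      have hA : A (q k) q' = h * f k * g⁻¹ := by
        rw [ihq, ← hh, hf]
        exact hAequiv _ _ hUs _ _
      rw [hq', hA, ← hh, smul_smul,
        List.range_succ, List.map_append, List.prod_append]
      congr 1
      simp only [List.map_cons, List.map_nil, List.prod_cons, List.prod_nil,
        mul_one, mul_inv_rev, inv_inv, hg]
      simp [mul_comm, mul_left_comm, mul_assoc]
  have hqN := key N le_rfl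
  rw [hloop] at hqN
  have hc : q N = (((List.range N).map f).prod)⁻¹ • qbar := by
    rw [hqN, mul_comm, mul_smul, hq0']
  have hπqN : π qbar = π (q N) := (hπ _ _).mpr ⟨_, hc.symm⟩
  exact huniq _ _ qbar (by rw [hκ qbar (q N) hπqN, hc])
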